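/- Let G act on a tree T with quotient T/G a single edge [0,1], i.e. the action has two vertex orbits and one edge orbit, with no inversions. Let G₁, G₂ be the stabilizers of adjacent vertices v₁, v₂ and H the stabilizer of the edge joining them. Then H = G₁ ∩ G₂, and the natural map from the amalgamated free product G₁ *_H G₂ to G is an isomorphism. -/

import Mathlib

open SimpleGraph

private lemma amalgam_bool_not_eq {a b : Bool} (h : ¬ a = b) : (!a) = b := by
  revert h; cases a <;> cases b <;> simp

private lemma amalgam_walk_aux {Γ V : Type*} [Group Γ] [MulAction Γ V]
    (T : SimpleGraph V) (hT : T.IsTree)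
    (hadj : ∀ (g : Γ) (u v : V), T.Adj u v → T.Adj (g • u) (g • v))
    (vtx : Bool → V) (hvx : ∀ b, T.Adj (vtx b) (vtx (!b))) :
    ∀ (l : List (Bool × Γ)) (x : Bool × Γ),
      (x :: l).Chain' (fun a b => a.1 ≠ b.1) →
      (∀ p ∈ x :: l, p.2 • vtx p.1 = vtx p.1 ∧ p.2 • vtx (!p.1) ≠ vtx (!p.1)) →
      ∃ (w : T.Walk (vtx x.1) ((x.2 * (l.map Prod.snd).prod) • vtx (!(l.getLastD x).1)))
        (h : T.Adj (vtx (!x.1)) (vtx x.1)),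
        (Walk.cons h w).IsPath ∧ w.length = l.length + 1 := by
  classical
  intro l
  induction l with
  | nil =>
    intro x _ hmem
    obtain ⟨hfix, hmov⟩ := hmem x List.mem_cons_self
    have adj1 : T.Adj (vtx x.1) (x.2 • vtx (!x.1)) := by
      have := hadj x.2 _ _ (hvx x.1)
      rwa [hfix] at this
    refine ⟨(Walk.cons adj1 Walk.nil).copy rfl (by simp), (hvx x.1).symm, ?_, by simp⟩
    · rw [Walk.isPath_def]
      simp only [Walk.support_cons, Walk.support_copy, Walk.support_nil]
      refine List.nodup_cons.2 ⟨?_, List.nodup_cons.2 ⟨?_, List.nodup_singleton _⟩⟩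
      · simp only [List.mem_cons, List.mem_singleton]
        rintro (h | h | h)
        · exact (hvx x.1).symm.ne h
        · exact hmov h.symm
        · exact (List.not_mem_nil h)
      · simp only [List.mem_singleton]
        intro h
        apply (hvx x.1).ne
        have : x.2 • vtx x.1 = x.2 • vtx (!x.1) := by rw [hfix, h]
        exact smul_left_cancel x.2 this
  | cons y l' ih =>
    intro x hchain hmem
    obtain ⟨hfix, hmov⟩ := hmem x List.mem_cons_self
    have hne : x.1 ≠ y.1 := (List.isChain_cons_cons.1 hchain).1
    have hy1 : y.1 = !x.1 := by revert hne; cases x.1 <;> cases y.1 <;> simp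
    obtain ⟨w', h', hpath', hlen'⟩ := ih y (List.isChain_cons_cons.1 hchain).2
        (fun p hp => hmem p (List.mem_cons_of_mem _ hp))
    let f : T →g T := ⟨fun u => x.2 • u, fun h => hadj x.2 _ _ h⟩
    have hfinj : Function.Injective f := MulAction.injective x.2
    have e₁ : x.2 • vtx (!y.1) = vtx x.1 := by
      rw [hy1, Bool.not_not]; exact hfix
    have e₂ : x.2 • ((y.2 * (l'.map Prod.snd).prod) • vtx (!(l'.getLastD y).1))
        = (x.2 * ((y :: l').map Prod.snd).prod) • vtx (!((y :: l').getLastD x).1) := by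
      rw [smul_smul, List.map_cons, List.prod_cons, List.getLastD_cons]
    let wmid : T.Walk (vtx (!y.1)) _ := Walk.cons h' w'
    let wnew : T.Walk (vtx x.1)
        ((x.2 * ((y :: l').map Prod.snd).prod) • vtx (!((y :: l').getLastD x).1)) :=
      ((wmid.map f).copy e₁ e₂)
    have hnewpath : wnew.IsPath := by
      rw [Walk.isPath_def, Walk.support_copy, ← Walk.isPath_def]
      exact Walk.map_isPath_of_injective hfinj hpath'
    refine ⟨wnew, (hvx x.1).symm, ?_, ?_⟩
    · refine hnewpath.cons ?_
      intro hu
      set u := vtx (!x.1) with hudef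
      have hq : (wnew.takeUntil u hu).IsPath := hnewpath.takeUntil hu
      obtain ⟨p₀, _, hup⟩ := hT.existsUnique_path (vtx x.1) u
      have h0 : T.Adj (vtx x.1) u := hvx x.1
      have e3 : wnew.takeUntil u hu = Walk.cons h0 Walk.nil :=
        (hup _ hq).trans (hup (Walk.cons h0 Walk.nil) (Path.singleton h0).2).symm
      have hdecomp : wnew = Walk.cons h0 (wnew.dropUntil u hu) := by
        conv_lhs => rw [← Walk.take_spec wnew hu]
        rw [e3, Walk.cons_append, Walk.nil_append]
      have hsup1 : wnew.support = vtx x.1 :: u :: (wnew.dropUntil u hu).support.tail := by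
        conv_lhs => rw [hdecomp]
        rw [Walk.support_cons]
        exact congrArg _ ((wnew.dropUntil u hu).support_eq_cons)
      have hsup2 : wnew.support = vtx x.1 :: (x.2 • vtx y.1) :: (w'.support.tail.map f) := by
        show ((wmid.map f).copy e₁ e₂).support = _
        rw [Walk.support_copy, Walk.support_map]
        show List.map (fun u => x.2 • u) wmid.support = _
        have : wmid.support = vtx (!y.1) :: vtx y.1 :: w'.support.tail := by
          rw [show wmid = Walk.cons h' w' from rfl, Walk.support_cons]
          exact congrArg _ w'.support_eq_cons
        rw [this]
        simp only [List.map_cons, e₁]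
        rfl
      have := hsup1.symm.trans hsup2
      simp only [List.cons.injEq] at this
      obtain ⟨-, h2, -⟩ := this
      rw [hy1] at h2
      exact hmov h2.symm
    · show wnew.length = _
      rw [Walk.length_copy, Walk.length_map]
      simp [wmid, hlen']

private lemma amalgam_ping_aux {Γ V : Type*} [Group Γ] [MulAction Γ V]
    (T : SimpleGraph V) (hT : T.IsTree)
    (hadj : ∀ (g : Γ) (u v : V), T.Adj u v → T.Adj (g • u) (g • v))
    (vtx : Bool → V) (hvx : ∀ b, T.Adj (vtx b) (vtx (!b)))
    (x : Bool × Γ) (l' : List (Bool × Γ))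
    (hchain : (x :: l').Chain' (fun a b => a.1 ≠ b.1))
    (hmem : ∀ p ∈ x :: l', p.2 • vtx p.1 = vtx p.1 ∧ p.2 • vtx (!p.1) ≠ vtx (!p.1)) :
    ¬ ∀ b, (((x :: l').map Prod.snd).prod) • vtx b = vtx b := by
  intro hfixall
  obtain ⟨w, h, hpath, hlen⟩ := amalgam_walk_aux T hT hadj vtx hvx l' x hchain hmem
  have he : ((x.2 * (l'.map Prod.snd).prod) • vtx (!(l'.getLastD x).1))
      = vtx (!(l'.getLastD x).1) := by
    have := hfixall (!(l'.getLastD x).1)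
    rwa [List.map_cons, List.prod_cons] at this
  let W : T.Walk (vtx (!x.1)) (vtx (!(l'.getLastD x).1)) := Walk.cons h (w.copy rfl he)
  have hWpath : W.IsPath := by
    rw [Walk.isPath_def] at hpath ⊢
    simpa [W, Walk.support_copy, Walk.support_cons] using hpath
  have hWlen : W.length = l'.length + 2 := by simp [W, hlen]
  by_cases hc : (l'.getLastD x).1 = x.1
  · have hcopy : vtx (!(l'.getLastD x).1) = vtx (!x.1) := by rw [hc]
    have hW' : (W.copy rfl hcopy).IsPath := by
      rw [Walk.isPath_def, Walk.support_copy, ← Walk.isPath_def]; exact hWpath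
    have := Walk.isPath_iff_eq_nil.1 hW'
    have hlen0 := congrArg Walk.length this
    rw [Walk.length_copy, hWlen] at hlen0
    simp at hlen0
  · have hc2 : (!(l'.getLastD x).1) = x.1 := amalgam_bool_not_eq hc
    have hcopy : vtx (!(l'.getLastD x).1) = vtx x.1 := by rw [hc2]
    have hW' : (W.copy rfl hcopy).IsPath := by
      rw [Walk.isPath_def, Walk.support_copy, ← Walk.isPath_def]; exact hWpath
    obtain ⟨p₀, _, hup⟩ := hT.existsUnique_path (vtx (!x.1)) (vtx x.1)
    have h0 : T.Adj (vtx (!x.1)) (vtx x.1) := h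
    have := (hup _ hW').trans (hup (Walk.cons h0 Walk.nil) (Path.singleton h0).2).symm
    have hlen1 := congrArg Walk.length this
    rw [Walk.length_copy, hWlen] at hlen1
    simp at hlen1

private lemma amalgam_bij_aux {Γ V : Type*} [Group Γ] [MulAction Γ V]
    (T : SimpleGraph V) (hT : T.IsTree)
    (hadj : ∀ (g : Γ) (u v : V), T.Adj u v → T.Adj (g • u) (g • v))
    (v₁ v₂ : V) (hv : T.Adj v₁ v₂)
    (hdistinct : ¬∃ g : Γ, g • v₁ = v₂)
    (heorb : ∀ u v : V, T.Adj u v →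
      ∃ g : Γ, (g • v₁ = u ∧ g • v₂ = v) ∨ (g • v₁ = v ∧ g • v₂ = u))
    (le₁ : ∀ b : Bool, MulAction.stabilizer Γ v₁ ⊓ MulAction.stabilizer Γ v₂ ≤
      (bif b then MulAction.stabilizer Γ v₁ else MulAction.stabilizer Γ v₂))
    (F : Monoid.PushoutI (fun b : Bool => Subgroup.inclusion (le₁ b)) →* Γ)
    (hFof : ∀ (b : Bool) (g : ↥(bif b then MulAction.stabilizer Γ v₁
        else MulAction.stabilizer Γ v₂)),
      F (Monoid.PushoutI.of (φ := fun b : Bool => Subgroup.inclusion (le₁ b)) b g) = ↑g)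
    (hFbase : ∀ h : ↥(MulAction.stabilizer Γ v₁ ⊓ MulAction.stabilizer Γ v₂),
      F (Monoid.PushoutI.base (fun b : Bool => Subgroup.inclusion (le₁ b)) h) = ↑h) :
    Function.Bijective F := by
  classical
  set A := MulAction.stabilizer Γ v₁ with hA
  set B := MulAction.stabilizer Γ v₂ with hB
  set vtx : Bool → V := fun b => bif b then v₁ else v₂ with hvtx
  have hvx : ∀ b, T.Adj (vtx b) (vtx (!b)) := by
    intro b; cases b
    · exact hv.symm
    · exact hv
  have hstab : ∀ (b : Bool) (g : Γ), g ∈ (bif b then A else B) ↔ g • vtx b = vtx b := by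
    intro b g; cases b <;> rfl
  constructor
  · -- injective
    rw [injective_iff_map_eq_one]
    intro w hw
    obtain ⟨d⟩ := Monoid.PushoutI.NormalWord.transversal_nonempty
      (fun b : Bool => Subgroup.inclusion (le₁ b))
      (fun b => Subgroup.inclusion_injective _)
    set W := Monoid.PushoutI.NormalWord.equiv (d := d) w with hWdef
    have hprod : W.prod = w := Monoid.PushoutI.NormalWord.equiv.symm_apply_apply w
    have hWeq : w = Monoid.PushoutI.base (fun b : Bool => Subgroup.inclusion (le₁ b)) W.head
        * Monoid.PushoutI.ofCoprodI W.toWord.prod := by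
      rw [← hprod]; rfl
    have hword : F (Monoid.PushoutI.ofCoprodI W.toWord.prod)
        = (W.toWord.toList.map (fun l => ((l.2 : Γ)))).prod := by
      rw [Monoid.CoprodI.Word.prod, map_list_prod, map_list_prod, List.map_map, List.map_map]
      congr 1
      refine List.map_congr_left fun l _ => ?_
      show F (Monoid.PushoutI.ofCoprodI (Monoid.CoprodI.of l.2)) = _
      rw [Monoid.PushoutI.ofCoprodI_of]
      exact hFof l.1 l.2
    have hFw : (W.head : Γ) * (W.toWord.toList.map (fun l => ((l.2 : Γ)))).prod = 1 := by
      rw [← hw, hWeq, map_mul, hFbase, hword]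
    rcases hlist : W.toWord.toList with _ | ⟨x, l'⟩
    · -- empty word
      rw [hlist] at hFw
      simp only [List.map_nil, List.prod_nil, mul_one] at hFw
      have h1 : W.head = 1 := OneMemClass.coe_eq_one.1 hFw
      rw [hWeq, h1, map_one, one_mul, Monoid.CoprodI.Word.prod, hlist]
      simp
    · -- nonempty word: contradiction
      exfalso
      -- the list of letters in Γ
      have hmemlist : ∀ l, l ∈ W.toWord.toList →
          ((l.2 : Γ) • vtx l.1 = vtx l.1 ∧ (l.2 : Γ) • vtx (!l.1) ≠ vtx (!l.1)) := by
        intro l hl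
        refine ⟨(hstab l.1 _).1 l.2.2, ?_⟩
        intro heq
        have hfix1 : (l.2 : Γ) • vtx l.1 = vtx l.1 := (hstab l.1 _).1 l.2.2
        obtain ⟨g', hg'⟩ : ∃ g' : Γ, g' = (l.2 : Γ) := ⟨_, rfl⟩
        rw [← hg'] at heq hfix1
        have hAB : (l.2 : Γ) ∈ A ⊓ B := by
          rw [← hg']
          have hmA : g' • v₁ = v₁ := by
            rcases Bool.eq_false_or_eq_true l.1 with h | h
            · have := hfix1; rw [h] at this; simpa [hvtx] using this
            · have := heq; rw [h] at this; simpa [hvtx] using this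
          have hmB : g' • v₂ = v₂ := by
            rcases Bool.eq_false_or_eq_true l.1 with h | h
            · have := heq; rw [h] at this; simpa [hvtx] using this
            · have := hfix1; rw [h] at this; simpa [hvtx] using this
          exact Subgroup.mem_inf.2 ⟨hmA, hmB⟩
        have hrange : l.2 ∈ MonoidHom.range (Subgroup.inclusion (le₁ l.1)) :=
          ⟨⟨(l.2 : Γ), hAB⟩, Subtype.ext rfl⟩
        have hset : l.2 ∈ d.set l.1 := W.normalized l.1 l.2 (by
          rw [hlist] at hl ⊢
          simpa using hl)
        have hone : l.2 = 1 := by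
          have hinj := (d.compl l.1).1
          have hpair := hinj (a₁ := (⟨l.2, hrange⟩, ⟨1, d.one_mem l.1⟩))
            (a₂ := (⟨1, Subgroup.one_mem _⟩, ⟨l.2, hset⟩)) (by simp)
          have := congrArg (fun p => (p.1 : _)) hpair
          simp at this
          exact congrArg Subtype.val this
        exact W.ne_one l hl hone
      -- apply ping pong
      set f : (Σ b : Bool, ↥(bif b then A else B)) → Bool × Γ :=
        fun l => (l.1, (l.2 : Γ)) with hf
      have hchain : ((x :: l').map f).Chain' (fun a b => a.1 ≠ b.1) := by
        show List.IsChain _ _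
        rw [List.isChain_map]
        have := W.toWord.chain_ne
        rw [hlist] at this
        exact this
      have hmem2 : ∀ p ∈ (x :: l').map f,
          p.2 • vtx p.1 = vtx p.1 ∧ p.2 • vtx (!p.1) ≠ vtx (!p.1) := by
        intro p hp
        obtain ⟨l, hl, rfl⟩ := List.mem_map.1 hp
        exact hmemlist l (by rw [hlist]; exact hl)
      have hping := amalgam_ping_aux T hT hadj vtx hvx (f x) (l'.map f)
        (by simpa using hchain) (by simpa using hmem2)
      apply hping
      intro b
      have hPval : (((f x :: l'.map f).map Prod.snd).prod) = (W.head : Γ)⁻¹ := by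
        have h0 : ((f x :: l'.map f).map Prod.snd) = (x :: l').map (fun l => ((l.2 : Γ))) := by
          simp [hf]
        rw [hlist] at hFw
        rw [h0]
        exact eq_inv_of_mul_eq_one_right hFw
      rw [hPval]
      have hW2 := W.head.2
      have hWb : (W.head : Γ) • vtx b = vtx b := by
        cases b
        · exact (Subgroup.mem_inf.1 hW2).2
        · exact (Subgroup.mem_inf.1 hW2).1
      rw [inv_smul_eq_iff]
      exact hWb.symm
  · -- surjective
    intro g
    have step : ∀ a b : V, T.Adj a b →
        ((∃ s ∈ A ⊔ B, s • v₁ = a) ∨ (∃ s ∈ A ⊔ B, s • v₂ = a)) →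
        ((∃ s ∈ A ⊔ B, s • v₁ = b) ∨ (∃ s ∈ A ⊔ B, s • v₂ = b)) := by
      rintro a b hab (⟨s, hs, hsv⟩ | ⟨s, hs, hsv⟩)
      · have hadj' : T.Adj v₁ (s⁻¹ • b) := by
          have := hadj s⁻¹ a b hab
          rwa [← hsv, inv_smul_smul] at this
        obtain ⟨k, hk⟩ := heorb _ _ hadj'
        rcases hk with ⟨hk1, hk2⟩ | ⟨hk1, hk2⟩
        · refine Or.inr ⟨s * k, mul_mem hs (Subgroup.mem_sup_left hk1), ?_⟩
          rw [mul_smul, hk2, smul_inv_smul]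
        · exact absurd ⟨k⁻¹, by rw [← hk2, inv_smul_smul]⟩ hdistinct
      · have hadj' : T.Adj v₂ (s⁻¹ • b) := by
          have := hadj s⁻¹ a b hab
          rwa [← hsv, inv_smul_smul] at this
        obtain ⟨k, hk⟩ := heorb _ _ hadj'
        rcases hk with ⟨hk1, hk2⟩ | ⟨hk1, hk2⟩
        · exact absurd ⟨k, hk1⟩ hdistinct
        · refine Or.inl ⟨s * k, mul_mem hs (Subgroup.mem_sup_right hk2), ?_⟩
          rw [mul_smul, hk1, smul_inv_smul]
    have walkind : ∀ (a b : V) (p : T.Walk a b),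
        ((∃ s ∈ A ⊔ B, s • v₁ = a) ∨ (∃ s ∈ A ⊔ B, s • v₂ = a)) →
        ((∃ s ∈ A ⊔ B, s • v₁ = b) ∨ (∃ s ∈ A ⊔ B, s • v₂ = b)) := by
      intro a b p
      induction p with
      | nil => exact id
      | cons h q ih => exact fun ha => ih (step _ _ h ha)
    obtain ⟨p⟩ := (hT.isConnected.preconnected v₁ (g • v₁) : T.Reachable _ _)
    have claim := walkind v₁ (g • v₁) p (Or.inl ⟨1, one_mem _, one_smul _ _⟩)
    have hgS : g ∈ A ⊔ B := by
      rcases claim with ⟨s, hs, hsv⟩ | ⟨s, hs, hsv⟩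
      · have hmem : s⁻¹ * g ∈ A := by
          rw [hA, MulAction.mem_stabilizer_iff, mul_smul, inv_smul_eq_iff, hsv]
        have : g = s * (s⁻¹ * g) := by group
        rw [this]
        exact mul_mem hs (Subgroup.mem_sup_left hmem)
      · exfalso
        apply hdistinct
        exact ⟨s⁻¹ * g, by rw [mul_smul, inv_smul_eq_iff, hsv]⟩
    have hle : A ⊔ B ≤ F.range := by
      refine sup_le ?_ ?_
      · intro a ha
        exact ⟨Monoid.PushoutI.of (φ := fun b : Bool => Subgroup.inclusion (le₁ b)) true
          ⟨a, ha⟩, hFof true ⟨a, ha⟩⟩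
      · intro a ha
        exact ⟨Monoid.PushoutI.of (φ := fun b : Bool => Subgroup.inclusion (le₁ b)) false
          ⟨a, ha⟩, hFof false ⟨a, ha⟩⟩
    exact hle hgS



/-- Let a group `Γ` act on a tree `T` (by graph automorphisms, without inversions) with
quotient `T/Γ` a single edge: there are two vertex orbits, represented by adjacent vertices
`v₁, v₂`, and one edge orbit. Let `G₁, G₂` be the stabilizers of `v₁, v₂` and `H` the
(setwise) stabilizer of the edge joining them. Then `H = G₁ ∩ G₂`, and the natural map from
the amalgamated free product `G₁ *_H G₂` to `Γ` (induced by the inclusions of the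
stabilizers) is an isomorphism. -/
theorem amalgam_of_action_on_tree {Γ V : Type*} [Group Γ] [MulAction Γ V]
    (T : SimpleGraph V) (hT : T.IsTree)
    (hadj : ∀ (g : Γ) (u v : V), T.Adj u v → T.Adj (g • u) (g • v))
    (v₁ v₂ : V) (hv : T.Adj v₁ v₂)
    (hvorb : ∀ v : V, (∃ g : Γ, g • v₁ = v) ∨ (∃ g : Γ, g • v₂ = v))
    (hdistinct : ¬∃ g : Γ, g • v₁ = v₂)
    (heorb : ∀ u v : V, T.Adj u v →
      ∃ g : Γ, (g • v₁ = u ∧ g • v₂ = v) ∨ (g • v₁ = v ∧ g • v₂ = u))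
    (hnoinv : ∀ (g : Γ) (u v : V), T.Adj u v → ¬(g • u = v ∧ g • v = u)) :
    ({g : Γ | (g • v₁ = v₁ ∧ g • v₂ = v₂) ∨ (g • v₁ = v₂ ∧ g • v₂ = v₁)} : Set Γ)
        = ↑(MulAction.stabilizer Γ v₁ ⊓ MulAction.stabilizer Γ v₂) ∧
      Function.Bijective
        (Monoid.PushoutI.lift
          (φ := fun b : Bool =>
            Subgroup.inclusion
              (show MulAction.stabilizer Γ v₁ ⊓ MulAction.stabilizer Γ v₂ ≤
                  (bif b then MulAction.stabilizer Γ v₁ else MulAction.stabilizer Γ v₂) by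
                cases b
                · exact inf_le_right
                · exact inf_le_left))
          (fun b => (bif b then MulAction.stabilizer Γ v₁
            else MulAction.stabilizer Γ v₂).subtype)
          (MulAction.stabilizer Γ v₁ ⊓ MulAction.stabilizer Γ v₂).subtype
          (fun b => by ext x; rfl)) := by
  classical
  refine ⟨?_, ?_⟩
  · ext g
    simp only [Set.mem_setOf_eq, SetLike.mem_coe, Subgroup.mem_inf,
      MulAction.mem_stabilizer_iff]
    constructor
    · rintro (⟨h1, h2⟩ | ⟨h1, h2⟩)
      · exact ⟨h1, h2⟩
      · exact absurd ⟨g, h1⟩ hdistinct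
    · exact fun h => Or.inl h
  · exact amalgam_bij_aux T hT hadj v₁ v₂ hv hdistinct heorb _ _
      (fun b g => by rw [Monoid.PushoutI.lift_of]; rfl)
      (fun h => by rw [Monoid.PushoutI.lift_base]; rfl)
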